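/- Let p > 2 be prime, k ≥ 3, and let a = (a_1,…,a_k), b = (b_1,…,b_k) ∈ 𝔽_p^k satisfy a_i b_j − a_j b_i ≠ 0 for all i ≠ j. Then there is a constant C (depending on p and k only) such that for every n ≥ 1, the number of tuples (h, (r_1,s_1), (r_2,s_2), (r_3,s_3), (r_4,s_4)) — where h ∈ 𝔽_p^n, each (r_j,s_j) ∈ (𝔽_p^n)² is a linearly independent pair, for each j one has h ∈ M(r_j,s_j) and h ⪰ |h'| for every h' ∈ M(r_j,s_j), and the 4k-element multiset ⋃_{j=1}^4 |M(r_j,s_j)| can be partitioned into pairs of equal elements — is at most C·p^{3n}. -/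
import Mathlib

open Finset
open scoped Classical

/-- `h ≻ 0` in the lexicographic order on `𝔽_p^n`, identifying `𝔽_p` with
`{−(p−1)/2, …, (p−1)/2}` via `ZMod.valMinAbs`. -/
def posLex (p n : ℕ) (h : Fin n → ZMod p) : Prop :=
  ∃ i : Fin n, 0 < (h i).valMinAbs ∧ ∀ j : Fin n, j < i → h j = 0

/-- The lexicographic order `g ⪯ h` on `𝔽_p^n`. -/
def lexLe (p n : ℕ) (g h : Fin n → ZMod p) : Prop :=
  g = h ∨ ∃ i : Fin n, (g i).valMinAbs < (h i).valMinAbs ∧ ∀ j : Fin n, j < i → g j = h j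

/-- `|h| := h` if `h ⪰ 0`, and `−h` otherwise. -/
noncomputable def absLex (p n : ℕ) (h : Fin n → ZMod p) : Fin n → ZMod p :=
  if h = 0 ∨ posLex p n h then h else -h

/-- The multiset `M(r,s) = {a_i r + b_i s : 1 ≤ i ≤ k}`. -/
def Mset (p n k : ℕ) (a b : Fin k → ZMod p) (r s : Fin n → ZMod p) :
    Multiset (Fin n → ZMod p) :=
  (Finset.univ : Finset (Fin k)).val.map (fun i => a i • r + b i • s)

namespace Stmt18Aux

lemma absLex_cases (p n : ℕ) (u : Fin n → ZMod p) :
    absLex p n u = u ∨ absLex p n u = -u := by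
  unfold absLex
  split_ifs
  · exact Or.inl rfl
  · exact Or.inr rfl

lemma absLex_eq_imp (p n : ℕ) {u v : Fin n → ZMod p}
    (h : absLex p n u = absLex p n v) : u = v ∨ u = -v := by
  rcases absLex_cases p n u with h1 | h1 <;> rcases absLex_cases p n v with h2 | h2 <;>
    rw [h1, h2] at h
  · exact Or.inl h
  · exact Or.inr h
  · exact Or.inr (neg_eq_iff_eq_neg.mp h)
  · exact Or.inl (neg_injective h)

/-- sign -/
def sgn (p : ℕ) (e : Bool) : ZMod p := if e then 1 else -1

/-- solve a 2×2 linear system over vectors -/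
def solve2 (p n k : ℕ) (a b : Fin k → ZMod p) (i i' : Fin k)
    (u v : Fin n → ZMod p) : (Fin n → ZMod p) × (Fin n → ZMod p) :=
  ((a i * b i' - a i' * b i)⁻¹ • (b i' • u - b i • v),
   (a i * b i' - a i' * b i)⁻¹ • (a i • v - a i' • u))

lemma solve2_eq (p n k : ℕ) (hp : p.Prime) (a b : Fin k → ZMod p) (i i' : Fin k)
    (r s u v : Fin n → ZMod p) (hu : a i • r + b i • s = u)
    (hv : a i' • r + b i' • s = v)
    (hΔ : a i * b i' - a i' * b i ≠ 0) : solve2 p n k a b i i' u v = (r, s) := by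
  haveI : Fact p.Prime := ⟨hp⟩
  subst hu hv
  unfold solve2
  refine Prod.ext ?_ ?_
  · show (a i * b i' - a i' * b i)⁻¹ •
      (b i' • (a i • r + b i • s) - b i • (a i' • r + b i' • s)) = r
    match_scalars <;> (field_simp; try ring)
  · show (a i * b i' - a i' * b i)⁻¹ •
      (a i • (a i' • r + b i' • s) - a i' • (a i • r + b i • s)) = s
    match_scalars <;> (field_simp; try ring)

/-- discrete reconstruction data -/
abbrev DT (k : ℕ) := (Fin k × Fin k × Fin 4 × Fin 4 × Bool) ×
  (Fin k × Fin k × Bool × Fin 4 × Fin k) × (Fin k × Fin k × Bool × Fin 4 × Fin k)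

namespace DT
variable {k : ℕ} (d : DT k)
abbrev ih0 : Fin k := d.1.1
abbrev i0 : Fin k := d.1.2.1
abbrev j0 : Fin 4 := d.1.2.2.1
abbrev j2 : Fin 4 := d.1.2.2.2.1
abbrev fl : Bool := d.1.2.2.2.2
abbrev ih1 : Fin k := d.2.1.1
abbrev is1 : Fin k := d.2.1.2.1
abbrev e1 : Bool := d.2.1.2.2.1
abbrev t1 : Fin 4 := d.2.1.2.2.2.1
abbrev ip1 : Fin k := d.2.1.2.2.2.2
abbrev ih2 : Fin k := d.2.2.1
abbrev is2 : Fin k := d.2.2.2.1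
abbrev e2 : Bool := d.2.2.2.2.1
abbrev t2 : Fin 4 := d.2.2.2.2.2.1
abbrev ip2 : Fin k := d.2.2.2.2.2.2
end DT

variable (p n k : ℕ) (a b : Fin k → ZMod p)

/-- evaluate `a i • x.1 + b i • x.2` -/
def wv (x : (Fin n → ZMod p) × (Fin n → ZMod p)) (i : Fin k) : Fin n → ZMod p :=
  a i • x.1 + b i • x.2

abbrev Q (p n k : ℕ) := ((Fin n → ZMod p) × (Fin n → ZMod p) × (Fin n → ZMod p)) × DT k

def hh (q : Q p n k) : Fin n → ZMod p :=
  wv p n k a b (q.1.1, q.1.2.1) q.2.ih0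

def V0 (q : Q p n k) : Fin 4 → (Fin n → ZMod p) × (Fin n → ZMod p) :=
  Function.update (fun _ => (q.1.1, q.1.2.1)) q.2.j0
    (if q.2.fl then ((a q.2.i0)⁻¹ • (hh p n k a b q - b q.2.i0 • q.1.2.2), q.1.2.2)
     else (q.1.2.2, (b q.2.i0)⁻¹ • (hh p n k a b q - a q.2.i0 • q.1.2.2)))

def V1 (q : Q p n k) : Fin 4 → (Fin n → ZMod p) × (Fin n → ZMod p) :=
  Function.update (V0 p n k a b q) 1
    (solve2 p n k a b q.2.ih1 q.2.is1 (hh p n k a b q)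
      (sgn p q.2.e1 • wv p n k a b (V0 p n k a b q q.2.t1) q.2.ip1))

def V2 (q : Q p n k) : Fin 4 → (Fin n → ZMod p) × (Fin n → ZMod p) :=
  Function.update (V1 p n k a b q) q.2.j2
    (solve2 p n k a b q.2.ih2 q.2.is2 (hh p n k a b q)
      (sgn p q.2.e2 • wv p n k a b (V1 p n k a b q q.2.t2) q.2.ip2))

def recon (q : Q p n k) :
    (Fin n → ZMod p) × (Fin 4 → (Fin n → ZMod p) × (Fin n → ZMod p)) :=
  (hh p n k a b q, V2 p n k a b q)

end Stmt18Aux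

open Stmt18Aux in
theorem stmt18 (p k : ℕ) [NeZero p] (hp : p.Prime) (hp2 : 2 < p) (hk : 3 ≤ k)
    (a b : Fin k → ZMod p)
    (hminors : ∀ i j : Fin k, i ≠ j → a i * b j - a j * b i ≠ 0) :
    ∃ C : ℝ, ∀ n : ℕ, 1 ≤ n →
      ((Finset.univ.filter
          (fun z : (Fin n → ZMod p) × (Fin 4 → (Fin n → ZMod p) × (Fin n → ZMod p)) =>
            (∀ j : Fin 4, LinearIndependent (ZMod p) ![(z.2 j).1, (z.2 j).2]) ∧
            (∀ j : Fin 4, z.1 ∈ Mset p n k a b (z.2 j).1 (z.2 j).2 ∧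
              ∀ h' ∈ Mset p n k a b (z.2 j).1 (z.2 j).2, lexLe p n (absLex p n h') z.1) ∧
            (∃ V : Multiset (Fin n → ZMod p),
              (∑ j : Fin 4, (Mset p n k a b (z.2 j).1 (z.2 j).2).map (absLex p n))
                = V + V))).card : ℝ)
        ≤ C * (p : ℝ) ^ (3 * n) := by
  classical
  haveI : Nontrivial (Fin k) :=
    ⟨⟨0, by omega⟩, ⟨1, by omega⟩, by simp [Fin.ext_iff]⟩
  have habnz : ∀ i : Fin k, ¬(a i = 0 ∧ b i = 0) := by
    rintro i ⟨ha, hb⟩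
    obtain ⟨j, hj⟩ := exists_ne i
    exact hminors i j (Ne.symm hj) (by rw [ha, hb]; ring)
  refine ⟨(Fintype.card (DT k) : ℝ), ?_⟩
  intro n hn
  haveI : Fact p.Prime := ⟨hp⟩
  set S := (Finset.univ.filter
          (fun z : (Fin n → ZMod p) × (Fin 4 → (Fin n → ZMod p) × (Fin n → ZMod p)) =>
            (∀ j : Fin 4, LinearIndependent (ZMod p) ![(z.2 j).1, (z.2 j).2]) ∧
            (∀ j : Fin 4, z.1 ∈ Mset p n k a b (z.2 j).1 (z.2 j).2 ∧
              ∀ h' ∈ Mset p n k a b (z.2 j).1 (z.2 j).2, lexLe p n (absLex p n h') z.1) ∧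
            (∃ V : Multiset (Fin n → ZMod p),
              (∑ j : Fin 4, (Mset p n k a b (z.2 j).1 (z.2 j).2).map (absLex p n))
                = V + V))) with hS
  have key : S ⊆ Finset.image (recon p n k a b) Finset.univ := by
    intro z hz
    rw [hS, Finset.mem_filter] at hz
    obtain ⟨-, hli, hmem, V, hV⟩ := hz
    -- notation
    set v : Fin 4 → (Fin n → ZMod p) × (Fin n → ZMod p) := z.2 with hv
    set w : Fin 4 → Fin k → (Fin n → ZMod p) :=
      fun j i => a i • (v j).1 + b i • (v j).2 with hw
    -- h-slots
    have hslot : ∀ j : Fin 4, ∃ i : Fin k, w j i = z.1 := by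
      intro j
      have := (hmem j).1
      rw [Mset, Multiset.mem_map] at this
      obtain ⟨i, -, hi⟩ := this
      exact ⟨i, hi⟩
    choose ihs hihs using hslot
    -- linear independence as pairs
    have hpair : ∀ (j : Fin 4) (c d : ZMod p),
        c • (v j).1 + d • (v j).2 = 0 → c = 0 ∧ d = 0 := by
      intro j
      exact fun c d => (LinearIndependent.pair_iff.mp (hli j)) c d
    -- injectivity of absLex ∘ w j
    have habs_inj : ∀ j : Fin 4,
        Function.Injective fun i : Fin k => absLex p n (w j i) := by
      intro j i i' he
      by_contra hne
      rcases absLex_eq_imp p n he with hcase | hcase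
      · have h0 : (a i - a i') • (v j).1 + (b i - b i') • (v j).2 = 0 := by
          rw [sub_smul, sub_smul, sub_add_sub_comm,
            show a i • (v j).1 + b i • (v j).2 = a i' • (v j).1 + b i' • (v j).2
              from hcase]
          exact sub_self _
        obtain ⟨h1, h2⟩ := hpair j _ _ h0
        have ha' : a i = a i' := sub_eq_zero.mp h1
        have hb' : b i = b i' := sub_eq_zero.mp h2
        exact hminors i i' hne (by rw [ha', hb']; ring)
      · have h0 : (a i + a i') • (v j).1 + (b i + b i') • (v j).2 = 0 := by
          rw [add_smul, add_smul, add_add_add_comm,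
            show a i • (v j).1 + b i • (v j).2 = -(a i' • (v j).1 + b i' • (v j).2)
              from hcase]
          exact neg_add_cancel _
        obtain ⟨h1, h2⟩ := hpair j _ _ h0
        have ha' : a i = -a i' := eq_neg_of_add_eq_zero_left h1
        have hb' : b i = -b i' := eq_neg_of_add_eq_zero_left h2
        exact hminors i i' hne (by rw [ha', hb']; ring)
    -- every slot matches a slot at another vertex
    have hE : ∀ (j : Fin 4) (i : Fin k), ∃ (j' : Fin 4) (i' : Fin k) (e : Bool),
        j' ≠ j ∧ w j i = sgn p e • w j' i' := by
      intro j i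
      by_contra hno
      push_neg at hno
      have hWmap : ∀ j' : Fin 4,
          (Mset p n k a b (z.2 j').1 (z.2 j').2).map (absLex p n)
            = Finset.univ.val.map (fun i0 : Fin k => absLex p n (w j' i0)) := by
        intro j'
        rw [Mset, Multiset.map_map]
        rfl
      have hcnt1 : Multiset.count (absLex p n (w j i))
          ((Mset p n k a b (z.2 j).1 (z.2 j).2).map (absLex p n)) = 1 := by
        rw [hWmap j, Multiset.count_map_eq_count' _ _ (habs_inj j)]
        exact Multiset.count_eq_one_of_mem Finset.univ.nodup (Finset.mem_univ i)
      have hcnt0 : ∀ j' : Fin 4, j' ≠ j →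
          Multiset.count (absLex p n (w j i))
            ((Mset p n k a b (z.2 j').1 (z.2 j').2).map (absLex p n)) = 0 := by
        intro j' hj'
        rw [hWmap j', Multiset.count_eq_zero]
        intro hmem'
        rw [Multiset.mem_map] at hmem'
        obtain ⟨i', -, hi'⟩ := hmem'
        rcases absLex_eq_imp p n hi' with hc | hc
        · exact hno j' i' true hj' (by rw [sgn, if_pos rfl, one_smul, hc])
        · exact hno j' i' false
            (by exact hj')
            (by rw [sgn, if_neg (by simp), neg_one_smul, hc, neg_neg])
      have htot : Multiset.count (absLex p n (w j i))
          (∑ j' : Fin 4, (Mset p n k a b (z.2 j').1 (z.2 j').2).map (absLex p n))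
            = 2 * Multiset.count (absLex p n (w j i)) V := by
        rw [hV, Multiset.count_add]; ring
      rw [Multiset.count_sum'] at htot
      rw [Finset.sum_eq_single j (fun j' _ hj' => hcnt0 j' hj') (by simp)] at htot
      rw [hcnt1] at htot
      omega
    -- choose data
    obtain ⟨istar, histar⟩ := exists_ne (ihs 1)
    obtain ⟨τ, i1', e1, hτne, hrel1⟩ := hE 1 istar
    have hτcases : τ = 0 ∨ τ = 2 ∨ τ = 3 := by
      have : ∀ t : Fin 4, t ≠ 1 → (t = 0 ∨ t = 2 ∨ t = 3) := by decide
      exact this τ hτne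
    set j0 : Fin 4 := if τ = 0 then 2 else τ with hj0def
    set j2 : Fin 4 := if j0 = 2 then 3 else 2 with hj2def
    have hj0or : j0 = 2 ∨ j0 = 3 := by
      rcases hτcases with h | h | h <;> simp [hj0def, h]
    have hτ0j0 : τ = 0 ∨ τ = j0 := by
      rcases hτcases with h | h | h
      · exact Or.inl h
      · exact Or.inr (by rw [hj0def, h]; decide)
      · exact Or.inr (by rw [hj0def, h]; decide)
    have hj2or : j2 = 2 ∨ j2 = 3 := by
      rcases hj0or with h | h <;> simp [hj2def, h]
    have hj0j2 : j0 ≠ j2 := by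
      rcases hj0or with h | h <;> rw [hj2def, h] <;> decide
    have hj0ne0 : j0 ≠ 0 := by rcases hj0or with h | h <;> rw [h] <;> decide
    have hj0ne1 : j0 ≠ 1 := by rcases hj0or with h | h <;> rw [h] <;> decide
    have hj2ne0 : j2 ≠ 0 := by rcases hj2or with h | h <;> rw [h] <;> decide
    have hj2ne1 : j2 ≠ 1 := by rcases hj2or with h | h <;> rw [h] <;> decide
    obtain ⟨istar2, histar2⟩ := exists_ne (ihs j2)
    obtain ⟨τ2, i2', e2, hτ2ne, hrel2⟩ := hE j2 istar2
    have hτ2cases : τ2 = 0 ∨ τ2 = j0 ∨ τ2 = 1 := by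
      rcases hj0or with h0 | h0 <;> rcases hj2or with h2 | h2
      · exact absurd (h0.trans h2.symm) hj0j2
      · rw [h0]
        have hgen : ∀ t : Fin 4, t ≠ 3 → (t = 0 ∨ t = 2 ∨ t = 1) := by decide
        exact hgen τ2 (by rw [← h2]; exact hτ2ne)
      · rw [h0]
        have hgen : ∀ t : Fin 4, t ≠ 2 → (t = 0 ∨ t = 3 ∨ t = 1) := by decide
        exact hgen τ2 (by rw [← h2]; exact hτ2ne)
      · exact absurd (h0.trans h2.symm) hj0j2
    -- the data and the point of Q
    set d : DT k := ((ihs 0, ihs j0, j0, j2, decide (b (ihs j0) = 0)),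
      (ihs 1, istar, e1, τ, i1'), (ihs j2, istar2, e2, τ2, i2')) with hd
    set t : Fin n → ZMod p :=
      if b (ihs j0) = 0 then (v j0).2 else (v j0).1 with ht
    set q : Q p n k := (((v 0).1, (v 0).2, t), d) with hq
    rw [Finset.mem_image]
    refine ⟨q, Finset.mem_univ _, ?_⟩
    -- hh q = z.1
    have hhq : hh p n k a b q = z.1 := hihs 0
    -- V0
    have hV0 : ∀ x : Fin 4, x = 0 ∨ x = j0 → V0 p n k a b q x = v x := by
      intro x hx
      rcases hx with hx | hx
      · subst hx
        exact Function.update_of_ne (Ne.symm hj0ne0) _ _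
      · subst hx
        refine (Function.update_self (β := fun _ : Fin 4 => (Fin n → ZMod p) × (Fin n → ZMod p)) _ _ _).trans ?_
        by_cases hb0 : b (ihs j0) = 0
        · have ha0 : a (ihs j0) ≠ 0 := fun h => habnz (ihs j0) ⟨h, hb0⟩
          have htv : q.1.2.2 = (v j0).2 := by
            show t = (v j0).2
            rw [ht]
            exact if_pos hb0
          rw [if_pos (show q.2.fl = true from decide_eq_true hb0)]
          rw [hhq, htv]
          refine Prod.ext ?_ rfl
          show (a (ihs j0))⁻¹ • (z.1 - b (ihs j0) • (v j0).2) = (v j0).1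
          rw [← hihs j0]
          show (a (ihs j0))⁻¹ •
            (a (ihs j0) • (v j0).1 + b (ihs j0) • (v j0).2 - b (ihs j0) • (v j0).2)
              = (v j0).1
          rw [add_sub_cancel_right, smul_smul, inv_mul_cancel₀ ha0, one_smul]
        · have htv : q.1.2.2 = (v j0).1 := by
            show t = (v j0).1
            rw [ht]
            exact if_neg hb0
          rw [if_neg (show ¬ q.2.fl = true from by
            show ¬ decide (b (ihs j0) = 0) = true
            simpa using hb0)]
          rw [hhq, htv]
          refine Prod.ext rfl ?_
          show (b (ihs j0))⁻¹ • (z.1 - a (ihs j0) • (v j0).1) = (v j0).2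
          rw [← hihs j0]
          show (b (ihs j0))⁻¹ •
            (a (ihs j0) • (v j0).1 + b (ihs j0) • (v j0).2 - a (ihs j0) • (v j0).1)
              = (v j0).2
          rw [add_sub_cancel_left, smul_smul, inv_mul_cancel₀ hb0, one_smul]
    -- V1
    have hV1 : ∀ x : Fin 4, x = 0 ∨ x = j0 ∨ x = 1 → V1 p n k a b q x = v x := by
      intro x hx
      rcases hx with hx | hx | hx
      · subst hx
        exact (Function.update_of_ne (show (0 : Fin 4) ≠ 1 by decide) _ _).trans
          (hV0 0 (Or.inl rfl))
      · subst hx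
        exact (Function.update_of_ne hj0ne1 _ _).trans (hV0 j0 (Or.inr rfl))
      · subst hx
        refine (Function.update_self (β := fun _ : Fin 4 => (Fin n → ZMod p) × (Fin n → ZMod p)) _ _ _).trans ?_
        rw [hhq]
        show solve2 p n k a b (ihs 1) istar z.1
          (sgn p e1 • wv p n k a b (V0 p n k a b q τ) i1') = v 1
        rw [hV0 τ hτ0j0]
        rw [show sgn p e1 • wv p n k a b (v τ) i1' = w 1 istar from hrel1.symm]
        exact solve2_eq p n k hp a b (ihs 1) istar (v 1).1 (v 1).2 z.1 (w 1 istar)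
          (hihs 1) rfl (hminors (ihs 1) istar (Ne.symm histar))
    -- V2
    have hV2 : ∀ x : Fin 4, V2 p n k a b q x = v x := by
      intro x
      by_cases hx2 : x = j2
      · subst hx2
        refine (Function.update_self (β := fun _ : Fin 4 => (Fin n → ZMod p) × (Fin n → ZMod p)) _ _ _).trans ?_
        rw [hhq]
        show solve2 p n k a b (ihs j2) istar2 z.1
          (sgn p e2 • wv p n k a b (V1 p n k a b q τ2) i2') = v j2
        rw [hV1 τ2 hτ2cases]
        rw [show sgn p e2 • wv p n k a b (v τ2) i2' = w j2 istar2 from hrel2.symm]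
        exact solve2_eq p n k hp a b (ihs j2) istar2 (v j2).1 (v j2).2 z.1
          (w j2 istar2) (hihs j2) rfl (hminors (ihs j2) istar2 (Ne.symm histar2))
      · refine (Function.update_of_ne hx2 _ _).trans ?_
        by_cases hx1 : x = 1
        · exact hV1 x (Or.inr (Or.inr hx1))
        · by_cases hx0 : x = j0
          · exact hV1 x (Or.inr (Or.inl hx0))
          · have hx00 : x = 0 := by
              rcases hj0or with h0 | h0 <;> rcases hj2or with h2 | h2
              · exact absurd (h0.trans h2.symm) hj0j2
              · rw [h0] at hx0; rw [h2] at hx2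
                revert hx0 hx1 hx2
                revert x; decide
              · rw [h0] at hx0; rw [h2] at hx2
                revert hx0 hx1 hx2
                revert x; decide
              · exact absurd (h0.trans h2.symm) hj0j2
            exact hV1 x (Or.inl hx00)
    exact Prod.ext hhq (funext hV2)
  -- cardinality computation
  have h1 : S.card ≤ Fintype.card (Q p n k) := by
    calc S.card ≤ (Finset.image (recon p n k a b) Finset.univ).card :=
          Finset.card_le_card key
      _ ≤ (Finset.univ : Finset (Q p n k)).card := Finset.card_image_le
      _ = Fintype.card (Q p n k) := Finset.card_univ
  have hF : Fintype.card (Fin n → ZMod p) = p ^ n := by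
    simp [Fintype.card_fun, ZMod.card]
  have h2 : Fintype.card (Q p n k) = Fintype.card (DT k) * p ^ (3 * n) := by
    rw [Fintype.card_prod, Fintype.card_prod, Fintype.card_prod, hF]
    rw [show 3 * n = n + (n + n) by ring, pow_add, pow_add]
    ring
  have h3 : S.card ≤ Fintype.card (DT k) * p ^ (3 * n) := h2 ▸ h1
  calc (S.card : ℝ) ≤ ((Fintype.card (DT k) * p ^ (3 * n) : ℕ) : ℝ) := by
        exact_mod_cast h3
    _ = (Fintype.card (DT k) : ℝ) * (p : ℝ) ^ (3 * n) := by push_cast; ring
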